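/- Let Q be a symmetric positive semidefinite real n×n matrix and, for i = 1,…,n, let rᵢ, sᵢ, tᵢ ∈ ℝⁿ be vectors which are subunit with respect to Q. Let H = (H₁,…,Hₙ), G = (G₁,…,Gₙ), g = (g₁,…,gₙ) ∈ ℝⁿ and F, f ∈ ℝ. Define A : ℝ×ℝⁿ → ℝⁿ and B : ℝ×ℝⁿ → ℝ by A(z,ξ) = Qξ − z·Σᵢ Gᵢ sᵢ + Σᵢ gᵢ tᵢ and B(z,ξ) = f − Σᵢ Hᵢ⟨rᵢ,ξ⟩ − Fz. Then there exists Ã : ℝ×ℝⁿ → ℝⁿ such that for all (z,ξ) ∈ ℝ×ℝⁿ: A(z,ξ) = √Q·Ã(z,ξ); ξ·A(z,ξ) ≥ (1/2)|√Q·ξ|² − 4n|G|²z² − 4n|g|²; |Ã(z,ξ)| ≤ |√Q·ξ| + √n|G||z| + √n|g|; and |B(z,ξ)| ≤ √n|H||√Q·ξ| + |F||z| + |f|. In particular, the linear equation div(Q(x)∇u) + HRu + S′Gu + Fu = f + T′g, with R, S, T collections of subunit vector fields, satisfies the structural conditions with p = γ = ψ = δ = 2 relative to Q. -/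

import Mathlib

open Matrix
open scoped RealInnerProductSpace


/-- The Euclidean norm of a vector in `ℝⁿ`, written via the dot product. -/
noncomputable def euclNorm {n : ℕ} (x : Fin n → ℝ) : ℝ := Real.sqrt (x ⬝ᵥ x)

noncomputable def Matrix.PosSemidef.sqrt {m : Type*} [Fintype m] [DecidableEq m]
    {M : Matrix m m ℝ} (hM : M.PosSemidef) : Matrix m m ℝ :=
  (hM.isHermitian.eigenvectorUnitary : Matrix m m ℝ) *
    diagonal ((↑) ∘ Real.sqrt ∘ hM.isHermitian.eigenvalues) *
    (star hM.isHermitian.eigenvectorUnitary : Matrix m m ℝ)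

lemma psd_sqrt_isHermitian {n : ℕ} {Q : Matrix (Fin n) (Fin n) ℝ} (hQ : Q.PosSemidef) :
    hQ.sqrt.IsHermitian := by
  unfold IsHermitian Matrix.PosSemidef.sqrt
  rw [conjTranspose_mul, conjTranspose_mul, diagonal_conjTranspose, ← star_eq_conjTranspose,
    star_star, ← star_eq_conjTranspose, star_trivial, Matrix.mul_assoc]

lemma psd_sqrt_mul_self {n : ℕ} {Q : Matrix (Fin n) (Fin n) ℝ} (hQ : Q.PosSemidef) :
    hQ.sqrt * hQ.sqrt = Q := by
  conv_rhs => rw [hQ.isHermitian.spectral_theorem]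
  have hU : (star hQ.isHermitian.eigenvectorUnitary : Matrix (Fin n) (Fin n) ℝ) *
      (hQ.isHermitian.eigenvectorUnitary : Matrix (Fin n) (Fin n) ℝ) = 1 :=
    Unitary.coe_star_mul_self _
  unfold Matrix.PosSemidef.sqrt
  rw [Unitary.conjStarAlgAut_apply]
  simp only [Matrix.mul_assoc]
  rw [← Matrix.mul_assoc _ (hQ.isHermitian.eigenvectorUnitary : Matrix (Fin n) (Fin n) ℝ), hU,
    Matrix.one_mul, ← Matrix.mul_assoc (diagonal _), diagonal_mul_diagonal]
  congr 3; funext i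
  simp [Real.mul_self_sqrt (hQ.eigenvalues_nonneg i)]

section helpers
variable {n : ℕ}

noncomputable def eL {n : ℕ} : (Fin n → ℝ) ≃ₗ[ℝ] EuclideanSpace ℝ (Fin n) :=
  (WithLp.linearEquiv 2 ℝ (Fin n → ℝ)).symm

lemma euclNorm_eq_norm (x : Fin n → ℝ) : euclNorm x = ‖eL x‖ := by
  rw [EuclideanSpace.norm_eq]
  unfold euclNorm dotProduct
  congr 1
  exact Finset.sum_congr rfl fun i _ => by
    simp [eL, WithLp.linearEquiv, Real.norm_eq_abs, sq_abs, sq]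

lemma inner_eL (x y : Fin n → ℝ) : ⟪eL x, eL y⟫ = x ⬝ᵥ y := by
  simp [eL, WithLp.linearEquiv, EuclideanSpace.inner_toLp_toLp, dotProduct, mul_comm]

lemma toEuclideanLin_eL (S : Matrix (Fin n) (Fin n) ℝ) (x : Fin n → ℝ) :
    Matrix.toEuclideanLin S (eL x) = eL (S.mulVec x) := by
  simp [eL, WithLp.linearEquiv, Matrix.toEuclideanLin_apply]

lemma dotProduct_self_nonneg' (x : Fin n → ℝ) : 0 ≤ x ⬝ᵥ x :=
  Finset.sum_nonneg fun _ _ => mul_self_nonneg _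

lemma euclNorm_nonneg (x : Fin n → ℝ) : 0 ≤ euclNorm x := Real.sqrt_nonneg _

lemma euclNorm_sq (x : Fin n → ℝ) : euclNorm x ^ 2 = x ⬝ᵥ x :=
  Real.sq_sqrt (dotProduct_self_nonneg' x)

lemma sum_abs_le_sqrt (G : Fin n → ℝ) :
    ∑ i, |G i| ≤ Real.sqrt n * euclNorm G := by
  have h1 : (∑ i, |G i|) ^ 2 ≤ (n : ℝ) * (G ⬝ᵥ G) := by
    have := sq_sum_le_card_mul_sum_sq (s := Finset.univ) (f := fun i : Fin n => |G i|)
    simp only [Finset.card_univ, Fintype.card_fin] at this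
    calc (∑ i, |G i|) ^ 2 ≤ (n : ℝ) * ∑ i, |G i| ^ 2 := by exact_mod_cast this
    _ = (n : ℝ) * (G ⬝ᵥ G) := by
        congr 1
        refine Finset.sum_congr rfl fun i _ => ?_
        rw [sq_abs, sq]
  have h2 : Real.sqrt n * euclNorm G = Real.sqrt ((n : ℝ) * (G ⬝ᵥ G)) := by
    rw [Real.sqrt_mul (Nat.cast_nonneg n)]; rfl
  rw [h2]
  exact Real.le_sqrt_of_sq_le h1

lemma subunit_rep (S : Matrix (Fin n) (Fin n) ℝ) (hS : S.IsHermitian) (v : Fin n → ℝ)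
    (h : ∀ ξ : Fin n → ℝ, (v ⬝ᵥ ξ) ^ 2 ≤ S.mulVec ξ ⬝ᵥ S.mulVec ξ) :
    ∃ w : Fin n → ℝ, S.mulVec w = v ∧ euclNorm w ≤ 1 := by
  set T : EuclideanSpace ℝ (Fin n) →ₗ[ℝ] EuclideanSpace ℝ (Fin n) := Matrix.toEuclideanLin S
    with hT
  have hsym : T.IsSymmetric := (Matrix.isHermitian_iff_isSymmetric).mp hS
  have hTapp : ∀ x : Fin n → ℝ, T (eL x) = eL (S.mulVec x) := toEuclideanLin_eL S
  have hro : (LinearMap.range T)ᗮ = LinearMap.ker T := by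
    ext x
    simp only [Submodule.mem_orthogonal, LinearMap.mem_range, LinearMap.mem_ker]
    constructor
    · intro hx
      have h1 : ⟪T (T x), x⟫ = 0 := hx (T (T x)) ⟨T x, rfl⟩
      rw [hsym (T x) x] at h1
      exact inner_self_eq_zero.mp h1
    · rintro hx u ⟨y, rfl⟩
      rw [hsym y x, hx, inner_zero_right]
  have hrange : (LinearMap.ker T)ᗮ = LinearMap.range T := by
    rw [← hro, Submodule.orthogonal_orthogonal]
  have hv : eL v ∈ (LinearMap.ker T)ᗮ := by
    intro u hu
    have hTu : T u = 0 := hu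
    have hSu : S.mulVec (eL.symm u) = 0 := by
      have h0 : T (eL (eL.symm u)) = 0 := by rw [eL.apply_symm_apply]; exact hTu
      rw [hTapp] at h0
      have := congrArg eL.symm h0
      simpa using this
    have hle := h (eL.symm u)
    rw [hSu] at hle
    simp only [zero_dotProduct] at hle
    have hvu : v ⬝ᵥ eL.symm u = 0 := by nlinarith [sq_nonneg (v ⬝ᵥ eL.symm u)]
    have h3 : ⟪u, eL v⟫ = (eL.symm u) ⬝ᵥ v := by
      rw [← inner_eL (eL.symm u) v, eL.apply_symm_apply]
    rw [h3, dotProduct_comm, hvu]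
  rw [hrange] at hv
  obtain ⟨w', hw'⟩ := hv
  obtain ⟨k, hk, w0, hw0, hdecomp⟩ :=
    Submodule.exists_add_mem_mem_orthogonal (K := LinearMap.ker T) w'
  have hTw0 : T w0 = eL v := by
    have h4 : T w' = T w0 := by rw [hdecomp, map_add, LinearMap.mem_ker.mp hk, zero_add]
    rw [← h4, hw']
  obtain ⟨ξ0, hξ0⟩ := hrange ▸ hw0
  have e1 : ⟪T ξ0, w0⟫ = ‖w0‖ ^ 2 := by rw [hξ0, real_inner_self_eq_norm_sq]
  have e3 : ⟪ξ0, eL v⟫ = v ⬝ᵥ eL.symm ξ0 := by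
    conv_lhs => rw [← eL.apply_symm_apply ξ0]
    rw [inner_eL, dotProduct_comm]
  have hn2 : ‖w0‖ ^ 2 = v ⬝ᵥ eL.symm ξ0 := by
    rw [← e1, hsym ξ0 w0, hTw0, e3]
  have hb := h (eL.symm ξ0)
  have hS2 : S.mulVec (eL.symm ξ0) ⬝ᵥ S.mulVec (eL.symm ξ0) = ‖w0‖ ^ 2 := by
    rw [← inner_eL, ← hTapp, eL.apply_symm_apply, hξ0, real_inner_self_eq_norm_sq]
  rw [hS2, ← hn2] at hb
  have hw0norm : ‖w0‖ ≤ 1 := by nlinarith [norm_nonneg w0, sq_nonneg (‖w0‖ ^ 2 - 1)]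
  refine ⟨eL.symm w0, ?_, ?_⟩
  · have h5 : T (eL (eL.symm w0)) = eL v := by rw [eL.apply_symm_apply]; exact hTw0
    rw [hTapp] at h5
    exact eL.injective h5
  · rw [euclNorm_eq_norm, eL.apply_symm_apply]; exact hw0norm

lemma dot_sum (ξ : Fin n → ℝ) (c : Fin n → ℝ) (u : Fin n → (Fin n → ℝ)) :
    ξ ⬝ᵥ (∑ i, c i • u i) = ∑ i, c i * (u i ⬝ᵥ ξ) := by
  unfold dotProduct
  simp only [Finset.sum_apply, Pi.smul_apply, smul_eq_mul, Finset.mul_sum]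
  rw [Finset.sum_comm]
  refine Finset.sum_congr rfl fun i _ => ?_
  exact Finset.sum_congr rfl fun j _ => by ring

end helpers

/-- For a symmetric positive semidefinite matrix `Q`, subunit vectors
`rᵢ, sᵢ, tᵢ`, and data `H, G, g ∈ ℝⁿ`, `F, f ∈ ℝ`, the functions
`A(z,ξ) = Qξ − z Σᵢ Gᵢ sᵢ + Σᵢ gᵢ tᵢ` and `B(z,ξ) = f − Σᵢ Hᵢ⟨rᵢ,ξ⟩ − Fz` coming from the
linear equation satisfy the structural conditions with `p = γ = ψ = δ = 2` relative to `Q`. -/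
theorem stmt14 {n : ℕ} (Q : Matrix (Fin n) (Fin n) ℝ) (hQ : Q.PosSemidef)
    (r s t : Fin n → (Fin n → ℝ))
    (hr : ∀ i, ∀ ξ : Fin n → ℝ, (r i ⬝ᵥ ξ) ^ 2 ≤ Q.mulVec ξ ⬝ᵥ ξ)
    (hs : ∀ i, ∀ ξ : Fin n → ℝ, (s i ⬝ᵥ ξ) ^ 2 ≤ Q.mulVec ξ ⬝ᵥ ξ)
    (ht : ∀ i, ∀ ξ : Fin n → ℝ, (t i ⬝ᵥ ξ) ^ 2 ≤ Q.mulVec ξ ⬝ᵥ ξ)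
    (H G g : Fin n → ℝ) (F f : ℝ)
    (A : ℝ → (Fin n → ℝ) → (Fin n → ℝ)) (B : ℝ → (Fin n → ℝ) → ℝ)
    (hA : ∀ (z : ℝ) (ξ : Fin n → ℝ),
      A z ξ = Q.mulVec ξ - z • (∑ i, G i • s i) + ∑ i, g i • t i)
    (hB : ∀ (z : ℝ) (ξ : Fin n → ℝ),
      B z ξ = f - (∑ i, H i * (r i ⬝ᵥ ξ)) - F * z) :
    ∃ Atil : ℝ → (Fin n → ℝ) → (Fin n → ℝ),
      ∀ (z : ℝ) (ξ : Fin n → ℝ),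
        A z ξ = hQ.sqrt.mulVec (Atil z ξ) ∧
        (1 / 2) * euclNorm (hQ.sqrt.mulVec ξ) ^ 2 - 4 * n * euclNorm G ^ 2 * z ^ 2 -
            4 * n * euclNorm g ^ 2 ≤ ξ ⬝ᵥ A z ξ ∧
        euclNorm (Atil z ξ) ≤
          euclNorm (hQ.sqrt.mulVec ξ) + Real.sqrt n * euclNorm G * |z| +
            Real.sqrt n * euclNorm g ∧
        |B z ξ| ≤ Real.sqrt n * euclNorm H * euclNorm (hQ.sqrt.mulVec ξ) +
            |F| * |z| + |f| := by
  set S := hQ.sqrt with hSdef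
  have hSherm : S.IsHermitian := psd_sqrt_isHermitian hQ
  have hSS : S * S = Q := psd_sqrt_mul_self hQ
  have hSt : Sᵀ = S := by
    rw [← Matrix.conjTranspose_eq_transpose_of_trivial, hSherm.eq]
  -- dot product identity
  have dotid : ∀ ξ : Fin n → ℝ, Q.mulVec ξ ⬝ᵥ ξ = S.mulVec ξ ⬝ᵥ S.mulVec ξ := by
    intro ξ
    rw [dotProduct_mulVec (S.mulVec ξ) S ξ]
    have hv : S.mulVec ξ ᵥ* S = Q.mulVec ξ := by
      conv_lhs => rw [← hSt]
      rw [vecMul_transpose, mulVec_mulVec, hSt, hSS]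
    rw [hv]
  -- representations of subunit vectors
  choose ws hws1 hws2 using fun i => subunit_rep S hSherm (s i)
    (fun ξ => by rw [← dotid]; exact hs i ξ)
  choose wt hwt1 hwt2 using fun i => subunit_rep S hSherm (t i)
    (fun ξ => by rw [← dotid]; exact ht i ξ)
  refine ⟨fun z ξ => S.mulVec ξ - z • (∑ i, G i • ws i) + ∑ i, g i • wt i, fun z ξ => ?_⟩
  set X := euclNorm (S.mulVec ξ) with hXdef
  have hX0 : 0 ≤ X := euclNorm_nonneg _
  have hXsq : X ^ 2 = Q.mulVec ξ ⬝ᵥ ξ := by rw [hXdef, euclNorm_sq, dotid]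
  set a := Real.sqrt n * euclNorm G with hadef
  set b := Real.sqrt n * euclNorm g with hbdef
  set c := Real.sqrt n * euclNorm H with hcdef
  have ha0 : 0 ≤ a := mul_nonneg (Real.sqrt_nonneg _) (euclNorm_nonneg _)
  have hb0 : 0 ≤ b := mul_nonneg (Real.sqrt_nonneg _) (euclNorm_nonneg _)
  have ha2 : a ^ 2 = (n : ℝ) * euclNorm G ^ 2 := by
    rw [hadef, mul_pow, Real.sq_sqrt (Nat.cast_nonneg n)]
  have hb2 : b ^ 2 = (n : ℝ) * euclNorm g ^ 2 := by
    rw [hbdef, mul_pow, Real.sq_sqrt (Nat.cast_nonneg n)]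
  -- subunit dot product bounds
  have habs : ∀ (v : Fin n → ℝ), (v ⬝ᵥ ξ) ^ 2 ≤ Q.mulVec ξ ⬝ᵥ ξ → |v ⬝ᵥ ξ| ≤ X := by
    intro v hv
    rw [← hXsq] at hv
    nlinarith [abs_nonneg (v ⬝ᵥ ξ), sq_abs (v ⬝ᵥ ξ)]
  -- Part 1
  have part1 : A z ξ = S.mulVec (S.mulVec ξ - z • (∑ i, G i • ws i) + ∑ i, g i • wt i) := by
    rw [hA]
    have lin : S.mulVec (S.mulVec ξ - z • (∑ i, G i • ws i) + ∑ i, g i • wt i)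
        = S.mulVec (S.mulVec ξ) - z • S.mulVec (∑ i, G i • ws i)
          + S.mulVec (∑ i, g i • wt i) := by
      simp only [← Matrix.mulVecLin_apply, map_add, map_sub, _root_.map_smul]
    have sumG : S.mulVec (∑ i, G i • ws i) = ∑ i, G i • s i := by
      rw [← Matrix.mulVecLin_apply, map_sum]
      refine Finset.sum_congr rfl fun i _ => ?_
      rw [_root_.map_smul, Matrix.mulVecLin_apply, hws1 i]
    have sumg : S.mulVec (∑ i, g i • wt i) = ∑ i, g i • t i := by
      rw [← Matrix.mulVecLin_apply, map_sum]
      refine Finset.sum_congr rfl fun i _ => ?_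
      rw [_root_.map_smul, Matrix.mulVecLin_apply, hwt1 i]
    have sq : S.mulVec (S.mulVec ξ) = Q.mulVec ξ := by rw [mulVec_mulVec, hSS]
    rw [lin, sumG, sumg, sq]
  refine ⟨part1, ?_, ?_, ?_⟩
  -- Part 2: lower bound for ξ ⬝ᵥ A z ξ
  · rw [hA]
    have expand : ξ ⬝ᵥ (Q.mulVec ξ - z • (∑ i, G i • s i) + ∑ i, g i • t i)
        = Q.mulVec ξ ⬝ᵥ ξ - z * (∑ i, G i * (s i ⬝ᵥ ξ)) + ∑ i, g i * (t i ⬝ᵥ ξ) := by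
      rw [dotProduct_add, dotProduct_sub, dotProduct_smul, smul_eq_mul,
        dot_sum ξ G s, dot_sum ξ g t, dotProduct_comm]
    rw [expand]
    have hGb : |∑ i, G i * (s i ⬝ᵥ ξ)| ≤ a * X := by
      calc |∑ i, G i * (s i ⬝ᵥ ξ)| ≤ ∑ i, |G i * (s i ⬝ᵥ ξ)| :=
            Finset.abs_sum_le_sum_abs _ _
      _ ≤ ∑ i, |G i| * X := by
          refine Finset.sum_le_sum fun i _ => ?_
          rw [abs_mul]
          exact mul_le_mul_of_nonneg_left (habs _ (hs i ξ)) (abs_nonneg _)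
      _ = (∑ i, |G i|) * X := by rw [Finset.sum_mul]
      _ ≤ a * X := mul_le_mul_of_nonneg_right (sum_abs_le_sqrt G) hX0
    have hgb : |∑ i, g i * (t i ⬝ᵥ ξ)| ≤ b * X := by
      calc |∑ i, g i * (t i ⬝ᵥ ξ)| ≤ ∑ i, |g i * (t i ⬝ᵥ ξ)| :=
            Finset.abs_sum_le_sum_abs _ _
      _ ≤ ∑ i, |g i| * X := by
          refine Finset.sum_le_sum fun i _ => ?_
          rw [abs_mul]
          exact mul_le_mul_of_nonneg_left (habs _ (ht i ξ)) (abs_nonneg _)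
      _ = (∑ i, |g i|) * X := by rw [Finset.sum_mul]
      _ ≤ b * X := mul_le_mul_of_nonneg_right (sum_abs_le_sqrt g) hX0
    set SG := ∑ i, G i * (s i ⬝ᵥ ξ)
    set Sg := ∑ i, g i * (t i ⬝ᵥ ξ)
    have h1 : z * SG ≤ X ^ 2 / 4 + a ^ 2 * z ^ 2 := by
      have e1 : z * SG ≤ |z| * (a * X) := by
        calc z * SG ≤ |z * SG| := le_abs_self _
        _ = |z| * |SG| := abs_mul z SG
        _ ≤ |z| * (a * X) := mul_le_mul_of_nonneg_left hGb (abs_nonneg z)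
      nlinarith [sq_nonneg (X - 2 * a * |z|), sq_abs z, abs_nonneg z]
    have h2 : -Sg ≤ X ^ 2 / 4 + b ^ 2 := by
      have e2 : -Sg ≤ b * X := (neg_le_abs Sg).trans hgb
      nlinarith [sq_nonneg (X - 2 * b)]
    rw [← hXsq]
    have e4 : a ^ 2 * z ^ 2 = (n : ℝ) * euclNorm G ^ 2 * z ^ 2 := by rw [ha2]
    have e5 : b ^ 2 = (n : ℝ) * euclNorm g ^ 2 := hb2
    have pos1 : 0 ≤ a ^ 2 * z ^ 2 := by positivity
    have pos2 : 0 ≤ b ^ 2 := sq_nonneg b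
    linarith [h1, h2]
  -- Part 3: norm bound on Atil
  · rw [euclNorm_eq_norm]
    have lmap : eL (S.mulVec ξ - z • (∑ i, G i • ws i) + ∑ i, g i • wt i)
        = eL (S.mulVec ξ) - z • eL (∑ i, G i • ws i) + eL (∑ i, g i • wt i) := by
      simp only [map_add, map_sub, _root_.map_smul]
    rw [lmap]
    have tri : ‖eL (S.mulVec ξ) - z • eL (∑ i, G i • ws i) + eL (∑ i, g i • wt i)‖
        ≤ ‖eL (S.mulVec ξ)‖ + |z| * ‖eL (∑ i, G i • ws i)‖ + ‖eL (∑ i, g i • wt i)‖ := by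
      calc ‖eL (S.mulVec ξ) - z • eL (∑ i, G i • ws i) + eL (∑ i, g i • wt i)‖
          ≤ ‖eL (S.mulVec ξ) - z • eL (∑ i, G i • ws i)‖ + ‖eL (∑ i, g i • wt i)‖ :=
            norm_add_le _ _
      _ ≤ ‖eL (S.mulVec ξ)‖ + ‖z • eL (∑ i, G i • ws i)‖ + ‖eL (∑ i, g i • wt i)‖ := by
            have := norm_sub_le (eL (S.mulVec ξ)) (z • eL (∑ i, G i • ws i))
            linarith
      _ = ‖eL (S.mulVec ξ)‖ + |z| * ‖eL (∑ i, G i • ws i)‖ + ‖eL (∑ i, g i • wt i)‖ := by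
            rw [norm_smul, Real.norm_eq_abs]
    have hGs : ‖eL (∑ i, G i • ws i)‖ ≤ a := by
      rw [map_sum]
      calc ‖∑ i, eL (G i • ws i)‖ ≤ ∑ i, ‖eL (G i • ws i)‖ := norm_sum_le _ _
      _ ≤ ∑ i, |G i| := by
          refine Finset.sum_le_sum fun i _ => ?_
          rw [_root_.map_smul, norm_smul, Real.norm_eq_abs]
          have : ‖eL (ws i)‖ ≤ 1 := by rw [← euclNorm_eq_norm]; exact hws2 i
          calc |G i| * ‖eL (ws i)‖ ≤ |G i| * 1 :=
                mul_le_mul_of_nonneg_left this (abs_nonneg _)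
          _ = |G i| := mul_one _
      _ ≤ a := sum_abs_le_sqrt G
    have hgs : ‖eL (∑ i, g i • wt i)‖ ≤ b := by
      rw [map_sum]
      calc ‖∑ i, eL (g i • wt i)‖ ≤ ∑ i, ‖eL (g i • wt i)‖ := norm_sum_le _ _
      _ ≤ ∑ i, |g i| := by
          refine Finset.sum_le_sum fun i _ => ?_
          rw [_root_.map_smul, norm_smul, Real.norm_eq_abs]
          have : ‖eL (wt i)‖ ≤ 1 := by rw [← euclNorm_eq_norm]; exact hwt2 i
          calc |g i| * ‖eL (wt i)‖ ≤ |g i| * 1 :=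
                mul_le_mul_of_nonneg_left this (abs_nonneg _)
          _ = |g i| := mul_one _
      _ ≤ b := sum_abs_le_sqrt g
    have hXn : ‖eL (S.mulVec ξ)‖ = X := (euclNorm_eq_norm _).symm
    calc ‖eL (S.mulVec ξ) - z • eL (∑ i, G i • ws i) + eL (∑ i, g i • wt i)‖
        ≤ ‖eL (S.mulVec ξ)‖ + |z| * ‖eL (∑ i, G i • ws i)‖ + ‖eL (∑ i, g i • wt i)‖ := tri
    _ ≤ X + a * |z| + b := by
        rw [hXn]
        have : |z| * ‖eL (∑ i, G i • ws i)‖ ≤ a * |z| := by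
          rw [mul_comm a |z|]
          exact mul_le_mul_of_nonneg_left hGs (abs_nonneg z)
        linarith
  -- Part 4: bound on B
  · rw [hB]
    have hHb : |∑ i, H i * (r i ⬝ᵥ ξ)| ≤ c * X := by
      calc |∑ i, H i * (r i ⬝ᵥ ξ)| ≤ ∑ i, |H i * (r i ⬝ᵥ ξ)| :=
            Finset.abs_sum_le_sum_abs _ _
      _ ≤ ∑ i, |H i| * X := by
          refine Finset.sum_le_sum fun i _ => ?_
          rw [abs_mul]
          exact mul_le_mul_of_nonneg_left (habs _ (hr i ξ)) (abs_nonneg _)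
      _ = (∑ i, |H i|) * X := by rw [Finset.sum_mul]
      _ ≤ c * X := mul_le_mul_of_nonneg_right (sum_abs_le_sqrt H) hX0
    calc |f - (∑ i, H i * (r i ⬝ᵥ ξ)) - F * z|
        ≤ |f - (∑ i, H i * (r i ⬝ᵥ ξ))| + |F * z| := abs_sub _ _
    _ ≤ |f| + |∑ i, H i * (r i ⬝ᵥ ξ)| + |F * z| := by
        have := abs_sub f (∑ i, H i * (r i ⬝ᵥ ξ))
        linarith
    _ ≤ c * X + |F| * |z| + |f| := by
        rw [abs_mul]
        linarith [hHb]
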